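/- Let (W_t) be a family of bounded self-adjoint operators on a finite-dimensional inner product space V with second-order expansion W_t = λI + Ẇ(t−t₀) + ½Ẅ(t−t₀)² + o(t−t₀)². Let μ be an eigenvalue of Ẇ with eigenprojection P⁽ⁱ⁾, and let ν be an eigenvalue of P⁽ⁱ⁾ẄP⁽ⁱ⁾ restricted to ran(P⁽ⁱ⁾). Then there is a choice of eigenvalue λ(t) ∈ Spec(W_t) for t near t₀ such that λ(t) = λ + μ(t−t₀) + ½ν(t−t₀)² + o(t−t₀)². -/

import Mathlib

open scoped Topology
open Asymptotics
noncomputable section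

open scoped InnerProductSpace

section AuxLemmasForEigenvalueCurve

variable {V : Type*} [NormedAddCommGroup V] [InnerProductSpace ℂ V] [FiniteDimensional ℂ V]

theorem exists_spec_close (A : V →L[ℂ] V) (hA : IsSelfAdjoint A) (x : ℝ) (u : V) (hu : u ≠ 0) :
    ∃ r : ℝ, (r : ℂ) ∈ spectrum ℂ A ∧ |r - x| * ‖u‖ ≤ ‖A u - (x : ℂ) • u‖ := by
  have : Nontrivial V := ⟨u, 0, hu⟩
  have hT : LinearMap.IsSymmetric (A : V →ₗ[ℂ] V) := hA.isSymmetric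
  set n := Module.finrank ℂ V with hn'
  have hn : Module.finrank ℂ V = n := rfl
  have hnpos : 0 < n := Module.finrank_pos
  have : Nonempty (Fin n) := ⟨⟨0, hnpos⟩⟩
  set B := hT.eigenvectorBasis hn with hB
  set lamv := hT.eigenvalues hn with hl
  obtain ⟨i, hi⟩ := Finite.exists_min (fun j => |lamv j - x|)
  refine ⟨lamv i, ?_, ?_⟩
  · rw [spectrum.mem_iff]
    intro hUnit
    obtain ⟨U, hU⟩ := hUnit
    have hAB : A (B i) = ((lamv i : ℂ)) • B i := hT.apply_eigenvectorBasis hn i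
    have hBne : B i ≠ 0 := B.toBasis.ne_zero i
    have h0 : (U : V →L[ℂ] V) (B i) = 0 := by
      rw [hU]
      simp [ContinuousLinearMap.sub_apply, Algebra.algebraMap_eq_smul_one, hAB]
    have : B i = 0 := by
      have h1 : ((U⁻¹ : (V →L[ℂ] V)ˣ) : V →L[ℂ] V) ((U : V →L[ℂ] V) (B i)) = B i := by
        rw [← ContinuousLinearMap.comp_apply, ← ContinuousLinearMap.mul_def, U.inv_mul]
        simp
      rw [h0] at h1
      simpa using h1.symm
    exact hBne this
  · set y := A u - (x : ℂ) • u with hy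
    have hkey : ∀ j, B.repr y j = ((lamv j - x : ℝ) : ℂ) * B.repr u j := by
      intro j
      have h1 : B.repr (A u) j = (lamv j : ℂ) * B.repr u j :=
        hT.eigenvectorBasis_apply_self_apply hn u j
      rw [hy, map_sub, map_smul]
      push_cast
      simp [h1]
      ring
    have hsq : (|lamv i - x| * ‖u‖) ^ 2 ≤ ‖y‖ ^ 2 := by
      have h2 : ‖u‖ = ‖B.repr u‖ := (B.repr.norm_map u).symm
      have h3 : ‖y‖ = ‖B.repr y‖ := (B.repr.norm_map y).symm
      rw [h2, h3, EuclideanSpace.norm_eq, EuclideanSpace.norm_eq, mul_pow,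
        Real.sq_sqrt (by positivity), Real.sq_sqrt (by positivity), Finset.mul_sum]
      apply Finset.sum_le_sum
      intro j _
      rw [hkey j, norm_mul]
      have h4 : ‖((lamv j - x : ℝ) : ℂ)‖ = |lamv j - x| := by
        rw [Complex.norm_real, Real.norm_eq_abs]
      rw [h4, mul_pow]
      have h6 := hi j
      have h5 : |lamv i - x| ^ 2 ≤ |lamv j - x| ^ 2 := by
        nlinarith [abs_nonneg (lamv i - x)]
      exact mul_le_mul_of_nonneg_right h5 (sq_nonneg _)
    have := Real.sqrt_le_sqrt hsq
    rwa [Real.sqrt_sq (by positivity), Real.sqrt_sq (norm_nonneg _)] at this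

theorem exists_solution (S : V →L[ℂ] V) (hS : IsSelfAdjoint S) (z : V)
    (hz : ∀ y ∈ LinearMap.ker (S : V →ₗ[ℂ] V), ⟪y, z⟫_ℂ = 0) : ∃ w, S w = z := by
  have hsym := hS.isSymmetric
  have hle : LinearMap.range (S : V →ₗ[ℂ] V) ≤ (LinearMap.ker (S : V →ₗ[ℂ] V))ᗮ := by
    rintro _ ⟨a, rfl⟩
    rw [Submodule.mem_orthogonal]
    intro k hk
    have hk0 : S k = 0 := LinearMap.mem_ker.mp hk
    calc ⟪k, S a⟫_ℂ = ⟪S k, a⟫_ℂ := (hsym k a).symm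
      _ = 0 := by rw [hk0, inner_zero_left]
  have hr : LinearMap.range (S : V →ₗ[ℂ] V) = LinearMap.range (S : V →ₗ[ℂ] V) := rfl
  have hk : LinearMap.ker (S : V →ₗ[ℂ] V) = LinearMap.ker (S : V →ₗ[ℂ] V) := rfl
  have h1 := LinearMap.finrank_range_add_finrank_ker (S : V →ₗ[ℂ] V)
  have h2 := Submodule.finrank_add_finrank_orthogonal (K := LinearMap.ker (S : V →ₗ[ℂ] V))
  rw [hr, hk] at h1
  have heq : LinearMap.range (S : V →ₗ[ℂ] V) = (LinearMap.ker (S : V →ₗ[ℂ] V))ᗮ :=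
    Submodule.eq_of_le_of_finrank_eq hle (by omega)
  have hzmem : z ∈ (LinearMap.ker (S : V →ₗ[ℂ] V))ᗮ := (Submodule.mem_orthogonal _ z).mpr hz
  rw [← heq] at hzmem
  exact hzmem

end AuxLemmasForEigenvalueCurve

lemma div_bound_aux {a nn b d vn : ℝ} (hmain : a * nn ≤ b * nn + d) (hd0 : 0 ≤ d)
    (hvpos : 0 < vn) (hut : vn / 2 ≤ nn) : a ≤ b + 2 * d / vn := by
  have hn0 : 0 < nn := by linarith
  have e2 : d * vn ≤ 2 * d * nn := by nlinarith
  have e3 : a * vn * nn ≤ (b * vn + 2 * d) * nn := by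
    nlinarith [mul_le_mul_of_nonneg_right hmain hvpos.le]
  have e4 : a * vn ≤ b * vn + 2 * d := le_of_mul_le_mul_right e3 hn0
  have e5 : a - b ≤ 2 * d / vn := by
    rw [le_div_iff₀ hvpos]
    nlinarith
  linarith

lemma cube_littleo (t₀ C : ℝ) :
    (fun t => |t - t₀| ^ 3 * C) =o[𝓝 t₀] fun t => (t - t₀) ^ 2 := by
  rw [Asymptotics.isLittleO_iff]
  intro ε hε
  rw [Metric.eventually_nhds_iff]
  refine ⟨ε / (|C| + 1), by positivity, fun t ht => ?_⟩
  have hd : |t - t₀| < ε / (|C| + 1) := by rwa [Real.dist_eq] at ht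
  have h1 : ‖|t - t₀| ^ 3 * C‖ = |t - t₀| ^ 3 * |C| := by
    simp [Real.norm_eq_abs, abs_mul, abs_pow, abs_abs]
  have h2 : ‖(t - t₀) ^ 2‖ = |t - t₀| ^ 2 := by
    rw [Real.norm_eq_abs, abs_pow]
  rw [h1, h2]
  have h3 : |t - t₀| * |C| ≤ ε := by
    have h4 : |t - t₀| * (|C| + 1) ≤ ε := by
      rw [← le_div_iff₀ (by positivity : (0:ℝ) < |C| + 1)]
      exact hd.le
    nlinarith [abs_nonneg (t - t₀), abs_nonneg C]
  calc |t - t₀| ^ 3 * |C| = (|t - t₀| * |C|) * |t - t₀| ^ 2 := by ring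
    _ ≤ ε * |t - t₀| ^ 2 := mul_le_mul_of_nonneg_right h3 (by positivity)

/-- Kato selection to second order: for a family of self-adjoint operators
`W_t = λI + Ẇ(t-t₀) + ½Ẅ(t-t₀)² + o((t-t₀)²)` on a finite-dimensional complex inner
product space, an eigenvalue `μ` of `Ẇ` with eigenprojection `P⁽ⁱ⁾`, and an eigenvalue `ν`
of the compression `P⁽ⁱ⁾ Ẅ P⁽ⁱ⁾` on `ran P⁽ⁱ⁾`, there is a choice of eigenvalue
`λ(t) ∈ Spec(W_t)` with `λ(t) = λ + μ(t-t₀) + ½ν(t-t₀)² + o((t-t₀)²)`. -/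
theorem eigenvalue_curve_second_order
    {V : Type*} [NormedAddCommGroup V] [InnerProductSpace ℂ V] [FiniteDimensional ℂ V]
    (W : ℝ → (V →L[ℂ] V)) (t₀ : ℝ)
    (hW : ∀ t, IsSelfAdjoint (W t))
    (lam : ℝ) (Wd Wdd : V →L[ℂ] V)
    (hWd : IsSelfAdjoint Wd) (hWdd : IsSelfAdjoint Wdd)
    (hexp : (fun t => W t - (lam • (1 : V →L[ℂ] V) + (t - t₀) • Wd
        + ((t - t₀) ^ 2 / 2) • Wdd)) =o[𝓝 t₀] fun t => (t - t₀) ^ 2)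
    (μ : ℝ) (Pi : V →L[ℂ] V)
    (hPi : IsIdempotentElem Pi ∧ IsSelfAdjoint Pi)
    (hPirange : LinearMap.range (Pi : V →ₗ[ℂ] V) = LinearMap.ker ((Wd - (μ : ℂ) • (1 : V →L[ℂ] V) : V →L[ℂ] V) : V →ₗ[ℂ] V))
    (hPine : Pi ≠ 0)
    (ν : ℝ) (v : V) (hv : v ≠ 0) (hvPi : Pi v = v)
    (hνeig : Pi (Wdd v) = (ν : ℂ) • v) :
    ∃ lamt : ℝ → ℝ,
      (∀ᶠ t in 𝓝 t₀, (lamt t : ℂ) ∈ spectrum ℂ (W t)) ∧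
      (fun t => lamt t - (lam + μ * (t - t₀) + ν / 2 * (t - t₀) ^ 2))
        =o[𝓝 t₀] fun t => (t - t₀) ^ 2 := by
  classical
  obtain ⟨hPidem, hPisa⟩ := hPi
  have rsmul : ∀ (s : ℝ) (x : V), s • x = (s : ℂ) • x := fun s x => by
    rw [← algebraMap_smul ℂ s x, Complex.coe_algebraMap]
  -- `v` is an eigenvector of `Wd`
  have hWdv : Wd v = (μ : ℂ) • v := by
    have hv1 : v ∈ LinearMap.range (Pi : V →ₗ[ℂ] V) := ⟨v, hvPi⟩
    rw [hPirange] at hv1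
    have h := LinearMap.mem_ker.mp hv1
    have h' : Wd v - (μ : ℂ) • v = 0 := by
      simpa [ContinuousLinearMap.sub_apply] using h
    rw [sub_eq_zero] at h'
    exact h'
  -- the self-adjoint operator `S = Wd - μ`
  set S : V →L[ℂ] V := Wd - (μ : ℂ) • 1 with hSdef
  have hSsa : IsSelfAdjoint S := by
    refine hWd.sub ?_
    rw [IsSelfAdjoint]
    simp [star_smul, Complex.star_def, Complex.conj_ofReal]
  -- the first-order correction equation is solvable
  set z : V := ((ν : ℂ)/2) • v - (1/2 : ℂ) • Wdd v with hzdef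
  have hzker : ∀ y ∈ LinearMap.ker (S : V →ₗ[ℂ] V), ⟪y, z⟫_ℂ = 0 := by
    intro y hy
    rw [← hPirange] at hy
    obtain ⟨a, ha⟩ := hy
    have hPiy : Pi y = y := by
      rw [← ha]
      calc Pi (Pi a) = (Pi * Pi) a := rfl
        _ = Pi a := by rw [hPidem]
    have hsym := hPisa.isSymmetric
    have h1 : ⟪y, Wdd v⟫_ℂ = (ν : ℂ) * ⟪y, v⟫_ℂ := by
      calc ⟪y, Wdd v⟫_ℂ = ⟪Pi y, Wdd v⟫_ℂ := by rw [hPiy]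
        _ = ⟪y, Pi (Wdd v)⟫_ℂ := hsym y (Wdd v)
        _ = (ν : ℂ) * ⟪y, v⟫_ℂ := by rw [hνeig, inner_smul_right]
    rw [hzdef, inner_sub_right, inner_smul_right, inner_smul_right, h1]
    ring
  obtain ⟨w, hw⟩ := exists_solution S hSsa z hzker
  have hWdw : Wd w = (μ : ℂ) • w + ((ν : ℂ)/2) • v - (1/2 : ℂ) • Wdd v := by
    have h1 : Wd w - (μ : ℂ) • w = z := by
      simpa [hSdef, ContinuousLinearMap.sub_apply] using hw
    rw [hzdef] at h1
    have := sub_eq_iff_eq_add.mp h1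
    rw [this]; abel
  -- the approximate eigenvector and eigenvalue curves
  set u : ℝ → V := fun s => v + (s : ℂ) • w with hudef
  set α : ℝ → ℝ := fun t => lam + μ * (t - t₀) + ν / 2 * (t - t₀) ^ 2 with hαdef
  set c₀ : V := (1/2 : ℂ) • Wdd w - ((ν : ℂ)/2) • w with hc₀def
  set M : ℝ → (V →L[ℂ] V) := fun t => lam • (1 : V →L[ℂ] V) + (t - t₀) • Wd
      + ((t - t₀) ^ 2 / 2) • Wdd with hMdef
  have hexp' : (fun t => W t - M t) =o[𝓝 t₀] fun t => (t - t₀) ^ 2 := hexp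
  have hkey : ∀ t, M t (u (t - t₀)) - ((α t : ℝ) : ℂ) • u (t - t₀)
      = ((t - t₀ : ℝ) : ℂ) ^ 3 • c₀ := by
    intro t
    simp only [hMdef, hudef, hαdef, hc₀def, ContinuousLinearMap.add_apply,
      ContinuousLinearMap.smul_apply, ContinuousLinearMap.one_apply, map_add, map_smul,
      rsmul, hWdv, hWdw]
    push_cast
    module
  have hres : ∀ t, W t (u (t - t₀)) - ((α t : ℝ) : ℂ) • u (t - t₀)
      = (W t - M t) (u (t - t₀)) + ((t - t₀ : ℝ) : ℂ) ^ 3 • c₀ := by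
    intro t
    rw [← hkey t, ContinuousLinearMap.sub_apply]
    abel
  have hvpos : (0 : ℝ) < ‖v‖ := norm_pos_iff.mpr hv
  -- eventual lower bound on ‖u (t - t₀)‖
  have hev : ∀ᶠ t in 𝓝 t₀, ‖v‖ / 2 ≤ ‖u (t - t₀)‖ := by
    rw [Metric.eventually_nhds_iff]
    refine ⟨‖v‖ / (2 * (‖w‖ + 1)), by positivity, fun t ht => ?_⟩
    have hd : |t - t₀| < ‖v‖ / (2 * (‖w‖ + 1)) := by rwa [Real.dist_eq] at ht
    have h1 : ‖((t - t₀ : ℝ) : ℂ) • w‖ ≤ ‖v‖ / 2 := by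
      rw [norm_smul, Complex.norm_real, Real.norm_eq_abs]
      have h2 : |t - t₀| * ‖w‖ ≤ (‖v‖ / (2 * (‖w‖ + 1))) * ‖w‖ :=
        mul_le_mul_of_nonneg_right hd.le (norm_nonneg w)
      have h3 : (‖v‖ / (2 * (‖w‖ + 1))) * ‖w‖ ≤ ‖v‖ / 2 := by
        rw [div_mul_eq_mul_div, div_le_div_iff₀ (by positivity) (by norm_num)]
        nlinarith [norm_nonneg w, hvpos]
      linarith
    have h4 : ‖v‖ - ‖((t - t₀ : ℝ) : ℂ) • w‖ ≤ ‖v + ((t - t₀ : ℝ) : ℂ) • w‖ := by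
      have := norm_sub_norm_le v (-(((t - t₀ : ℝ) : ℂ) • w))
      simpa [sub_neg_eq_add] using this
    show ‖v‖ / 2 ≤ ‖v + ((t - t₀ : ℝ) : ℂ) • w‖
    linarith
  have hne : ∀ᶠ t in 𝓝 t₀, u (t - t₀) ≠ 0 := by
    filter_upwards [hev] with t h
    intro h0
    rw [h0, norm_zero] at h
    linarith
  -- the eigenvalue selection
  set lamt : ℝ → ℝ := fun t =>
    if h : u (t - t₀) ≠ 0 then
      (exists_spec_close (W t) (hW t) (α t) (u (t - t₀)) h).choose
    else 0 with hlamtdef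
  have hlamt_spec : ∀ t, u (t - t₀) ≠ 0 →
      ((lamt t : ℝ) : ℂ) ∈ spectrum ℂ (W t) ∧
      |lamt t - α t| * ‖u (t - t₀)‖ ≤ ‖W t (u (t - t₀)) - ((α t : ℝ) : ℂ) • u (t - t₀)‖ := by
    intro t h
    have : lamt t = (exists_spec_close (W t) (hW t) (α t) (u (t - t₀)) h).choose := by
      rw [hlamtdef]; exact dif_pos h
    rw [this]
    exact (exists_spec_close (W t) (hW t) (α t) (u (t - t₀)) h).choose_spec
  refine ⟨lamt, ?_, ?_⟩
  · filter_upwards [hne] with t h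
    exact (hlamt_spec t h).1
  · -- the asymptotic estimate
    set C : ℝ := 2 * ‖c₀‖ / ‖v‖ with hCdef
    have hbound : ∀ᶠ t in 𝓝 t₀, |lamt t - α t| ≤ ‖W t - M t‖ + |t - t₀| ^ 3 * C := by
      filter_upwards [hev] with t hut
      have hune : u (t - t₀) ≠ 0 := by
        intro h0; rw [h0, norm_zero] at hut; linarith
      obtain ⟨-, hsp⟩ := hlamt_spec t hune
      have h2 : ‖W t (u (t - t₀)) - ((α t : ℝ) : ℂ) • u (t - t₀)‖
          ≤ ‖W t - M t‖ * ‖u (t - t₀)‖ + |t - t₀| ^ 3 * ‖c₀‖ := by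
        rw [hres t]
        refine (norm_add_le _ _).trans ?_
        gcongr
        · exact ContinuousLinearMap.le_opNorm _ _
        · rw [norm_smul, norm_pow, Complex.norm_real, Real.norm_eq_abs]
      have hCeq : |t - t₀| ^ 3 * C = 2 * (|t - t₀| ^ 3 * ‖c₀‖) / ‖v‖ := by
        rw [hCdef]; field_simp
      rw [hCeq]
      exact div_bound_aux (le_trans hsp h2) (by positivity) hvpos hut
    have hcube : (fun t => |t - t₀| ^ 3 * C) =o[𝓝 t₀] fun t => (t - t₀) ^ 2 :=
      cube_littleo t₀ C
    have hsum : (fun t => ‖W t - M t‖ + |t - t₀| ^ 3 * C) =o[𝓝 t₀] fun t => (t - t₀) ^ 2 :=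
      hexp'.norm_left.add hcube
    have hgoal : (fun t => lamt t - α t) =o[𝓝 t₀] fun t => (t - t₀) ^ 2 := by
      refine IsBigO.trans_isLittleO ?_ hsum
      refine IsBigO.of_bound 1 ?_
      filter_upwards [hbound] with t h
      rw [one_mul, Real.norm_eq_abs, Real.norm_eq_abs]
      refine h.trans (le_abs_self _)
    exact hgoal
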